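/- Let α > 0 and k > 0. If E_α(-2 k^α t^α) = E_α(-k^α t^α) · E_α(-k^α t^α) for all t ≥ 0, then Γ(2α + 1) = 2 · Γ(α + 1)², i.e. Γ(2α+1) / (4 Γ(α+1) Γ(α+1)) = 1/2. -/

import Mathlib

open Real Filter Topology

/-- The Mittag-Leffler function `E_α(z) = ∑_{k=0}^∞ z^k / Γ(αk + 1)`. -/
noncomputable def mittagLeffler (α z : ℝ) : ℝ :=
  ∑' k : ℕ, z ^ k / Real.Gamma (α * k + 1)

/-- Log-convexity step: `Γ(b+1+α) ≥ b^α Γ(b+1)`. -/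
lemma gamma_step {α b : ℝ} (hα : 0 < α) (hb : 0 < b) :
    b ^ α * Real.Gamma (b + 1) ≤ Real.Gamma (b + 1 + α) := by
  have hΓb := Real.Gamma_pos_of_pos hb
  have hb1 : (0:ℝ) < b + 1 := by linarith
  have hb1α : (0:ℝ) < b + 1 + α := by linarith
  have hΓb1 := Real.Gamma_pos_of_pos hb1
  have hΓb1α := Real.Gamma_pos_of_pos hb1α
  have hs := Real.convexOn_log_Gamma.slope_mono_adjacent (Set.mem_Ioi.2 hb)
    (Set.mem_Ioi.2 hb1α) (by linarith : b < b + 1) (by linarith : b + 1 < b + 1 + α)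
  simp only [Function.comp] at hs
  have h1 : Real.log (Real.Gamma (b + 1)) = Real.log b + Real.log (Real.Gamma b) := by
    rw [Real.Gamma_add_one hb.ne', Real.log_mul hb.ne' hΓb.ne']
  have e1 : b + 1 - b = 1 := by ring
  have e2 : b + 1 + α - (b + 1) = α := by ring
  rw [e1, e2, div_one, h1] at hs
  have hs' : Real.log b ≤ (Real.log (Real.Gamma (b + 1 + α)) - Real.log (Real.Gamma (b + 1))) / α := by
    rw [h1]; linarith
  have key : Real.log b * α + Real.log (Real.Gamma (b + 1)) ≤ Real.log (Real.Gamma (b + 1 + α)) := by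
    have := (le_div_iff₀ hα).1 hs'
    linarith
  calc b ^ α * Real.Gamma (b + 1)
      = Real.exp (Real.log b * α) * Real.exp (Real.log (Real.Gamma (b + 1))) := by
        rw [Real.rpow_def_of_pos hb, Real.exp_log hΓb1]
    _ = Real.exp (Real.log b * α + Real.log (Real.Gamma (b + 1))) := by rw [← Real.exp_add]
    _ ≤ Real.exp (Real.log (Real.Gamma (b + 1 + α))) := Real.exp_le_exp.2 key
    _ = Real.Gamma (b + 1 + α) := Real.exp_log hΓb1α

lemma summable_ml (α x : ℝ) (hα : 0 < α) (j : ℕ) :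
    Summable (fun n : ℕ => x ^ n / Real.Gamma (α * (n + j) + 1)) := by
  apply summable_of_ratio_norm_eventually_le (r := 1/2) (by norm_num)
  have hC : Tendsto (fun n : ℕ => α * ((n : ℝ) + j)) atTop atTop := by
    apply Tendsto.const_mul_atTop hα
    exact tendsto_atTop_add_const_right _ _ tendsto_natCast_atTop_atTop
  filter_upwards [hC.eventually_ge_atTop ((2 * |x| + 1) ^ α⁻¹), eventually_ge_atTop 1]
    with n hn hn1
  set b : ℝ := α * ((n : ℝ) + j) with hbdef
  have hb : 0 < b := by
    have : (1:ℝ) ≤ (n : ℝ) + j := by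
      have : (1:ℝ) ≤ (n : ℝ) := by exact_mod_cast hn1
      have : (0:ℝ) ≤ (j : ℝ) := Nat.cast_nonneg j
      linarith
    nlinarith
  have hΓb1 := Real.Gamma_pos_of_pos (by linarith : (0:ℝ) < b + 1)
  have hΓb1α := Real.Gamma_pos_of_pos (by linarith : (0:ℝ) < b + 1 + α)
  have hbig : (2 * |x| + 1) ≤ b ^ α := by
    calc 2 * |x| + 1 = ((2 * |x| + 1) ^ α⁻¹) ^ α :=
          (Real.rpow_inv_rpow (by positivity) hα.ne').symm
      _ ≤ b ^ α := Real.rpow_le_rpow (by positivity) hn hα.le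
  have key : (2 * |x| + 1) * Real.Gamma (b + 1) ≤ Real.Gamma (b + 1 + α) :=
    le_trans (mul_le_mul_of_nonneg_right hbig hΓb1.le) (gamma_step hα hb)
  have harg : α * (((n + 1 : ℕ) : ℝ) + j) + 1 = b + 1 + α := by push_cast [hbdef]; ring
  have harg2 : α * ((n : ℝ) + j) + 1 = b + 1 := by rw [hbdef]
  simp only [norm_div, norm_pow, Real.norm_eq_abs]
  rw [harg, harg2, abs_of_pos hΓb1α, abs_of_pos hΓb1]
  rw [div_le_iff₀ hΓb1α]
  calc |x| ^ (n + 1) = |x| * |x| ^ n := by ring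
    _ ≤ (1/2 * (2 * |x| + 1)) * |x| ^ n := by
        have := pow_nonneg (abs_nonneg x) n
        nlinarith [abs_nonneg x]
    _ = 1/2 * (|x| ^ n / Real.Gamma (b + 1)) * ((2 * |x| + 1) * Real.Gamma (b + 1)) := by
        field_simp
    _ ≤ 1/2 * (|x| ^ n / Real.Gamma (b + 1)) * Real.Gamma (b + 1 + α) := by
        apply mul_le_mul_of_nonneg_left key
        positivity

/-- Shifted Mittag-Leffler tail. -/
noncomputable def mlAux (α x : ℝ) (j : ℕ) : ℝ :=
  ∑' n : ℕ, x ^ n / Real.Gamma (α * (n + j) + 1)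

lemma mlAux_succ (α x : ℝ) (hα : 0 < α) (j : ℕ) :
    mlAux α x j = 1 / Real.Gamma (α * j + 1) + x * mlAux α x (j + 1) := by
  rw [mlAux, Summable.tsum_eq_zero_add (summable_ml α x hα j)]
  congr 1
  · norm_num
  · rw [mlAux, ← tsum_mul_left]
    apply tsum_congr
    intro n
    push_cast
    rw [pow_succ]
    ring_nf

lemma mlAux_abs_le (α x : ℝ) (hα : 0 < α) (hx : |x| ≤ 1) (j : ℕ) :
    |mlAux α x j| ≤ ∑' n : ℕ, 1 / Real.Gamma (α * (n + j) + 1) := by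
  have hsum1 : Summable (fun n : ℕ => (1:ℝ) ^ n / Real.Gamma (α * (n + j) + 1)) :=
    summable_ml α 1 hα j
  simp only [one_pow] at hsum1
  have hΓ : ∀ n : ℕ, (0:ℝ) < Real.Gamma (α * (n + j) + 1) := by
    intro n
    apply Real.Gamma_pos_of_pos
    positivity
  have habs : ∀ n : ℕ, ‖x ^ n / Real.Gamma (α * (n + j) + 1)‖
      = |x| ^ n / Real.Gamma (α * (n + j) + 1) := by
    intro n
    rw [norm_div, norm_pow, Real.norm_eq_abs, Real.norm_eq_abs, abs_of_pos (hΓ n)]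
  have hsumabs : Summable (fun n : ℕ => ‖x ^ n / Real.Gamma (α * (n + j) + 1)‖) := by
    simp only [habs]; exact summable_ml α |x| hα j
  calc |mlAux α x j| ≤ ∑' n : ℕ, ‖x ^ n / Real.Gamma (α * (n + j) + 1)‖ :=
        norm_tsum_le_tsum_norm hsumabs
    _ ≤ ∑' n : ℕ, 1 / Real.Gamma (α * (n + j) + 1) := by
        apply Summable.tsum_le_tsum _ hsumabs hsum1
        intro n
        rw [habs n]
        gcongr
        exact pow_le_one₀ (abs_nonneg x) hx

lemma mlAux_tendsto (α : ℝ) (hα : 0 < α) (j : ℕ) :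
    Tendsto (fun x => mlAux α x j) (𝓝 0) (𝓝 (1 / Real.Gamma (α * j + 1))) := by
  rw [tendsto_iff_norm_sub_tendsto_zero]
  set M : ℝ := ∑' n : ℕ, 1 / Real.Gamma (α * (n + (j + 1)) + 1) with hM
  have hbound : ∀ x : ℝ, |x| ≤ 1 →
      ‖mlAux α x j - 1 / Real.Gamma (α * j + 1)‖ ≤ M * |x| := by
    intro x hx
    rw [mlAux_succ α x hα j]
    have : 1 / Real.Gamma (α * j + 1) + x * mlAux α x (j + 1)
        - 1 / Real.Gamma (α * j + 1) = x * mlAux α x (j + 1) := by ring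
    rw [this, Real.norm_eq_abs, abs_mul]
    rw [mul_comm]
    have hb := mlAux_abs_le α x hα hx (j + 1)
    push_cast at hb
    rw [← hM] at hb
    exact mul_le_mul_of_nonneg_right hb (abs_nonneg x)
  have habs1 : ∀ᶠ x : ℝ in 𝓝 0, |x| ≤ 1 := by
    have : Tendsto (fun x : ℝ => |x|) (𝓝 0) (𝓝 0) := by
      simpa using continuous_abs.tendsto (0:ℝ)
    exact this.eventually_le_const (by norm_num)
  apply squeeze_zero' (by filter_upwards with x; positivity)
    (by filter_upwards [habs1] with x hx; exact hbound x hx)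
  have : Tendsto (fun x : ℝ => M * |x|) (𝓝 0) (𝓝 (M * 0)) := by
    apply Tendsto.const_mul
    simpa using continuous_abs.tendsto (0:ℝ)
  simpa using this

lemma ml_expand (α x : ℝ) (hα : 0 < α) :
    mittagLeffler α x = 1 + x / Real.Gamma (α + 1) + x ^ 2 * mlAux α x 2 := by
  have h0 : mittagLeffler α x = mlAux α x 0 := by
    apply tsum_congr; intro n; norm_num
  rw [h0, mlAux_succ α x hα 0, mlAux_succ α x hα 1]
  simp [Real.Gamma_one]
  ring

theorem gamma_identity_of_mittagLeffler_sq (α k : ℝ) (hα : 0 < α) (hk : 0 < k)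
    (h : ∀ t : ℝ, 0 ≤ t →
      mittagLeffler α (-2 * k ^ α * t ^ α) =
        mittagLeffler α (-(k ^ α) * t ^ α) * mittagLeffler α (-(k ^ α) * t ^ α)) :
    Real.Gamma (2 * α + 1) = 2 * Real.Gamma (α + 1) ^ 2 ∧
      Real.Gamma (2 * α + 1) / (4 * Real.Gamma (α + 1) * Real.Gamma (α + 1)) = 1 / 2 := by
  have hkα : (0:ℝ) < k ^ α := Real.rpow_pos_of_pos hk α
  -- reparametrize: E(-2s) = E(-s)^2 for all s ≥ 0
  have h' : ∀ s : ℝ, 0 ≤ s →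
      mittagLeffler α (-2 * s) = mittagLeffler α (-s) * mittagLeffler α (-s) := by
    intro s hs
    have ht : (0:ℝ) ≤ s ^ α⁻¹ / k := by positivity
    have hts : k ^ α * (s ^ α⁻¹ / k) ^ α = s := by
      rw [Real.div_rpow (Real.rpow_nonneg hs _) hk.le, Real.rpow_inv_rpow hs hα.ne']
      field_simp
    have := h (s ^ α⁻¹ / k) ht
    rw [show (-2 : ℝ) * k ^ α * (s ^ α⁻¹ / k) ^ α = -2 * (k ^ α * (s ^ α⁻¹ / k) ^ α) by ring,
      show -(k ^ α) * (s ^ α⁻¹ / k) ^ α = -(k ^ α * (s ^ α⁻¹ / k) ^ α) by ring, hts] at this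
    simpa using this
  set c1 : ℝ := 1 / Real.Gamma (α + 1) with hc1
  set c2 : ℝ := 1 / Real.Gamma (α * 2 + 1) with hc2
  set A : ℝ → ℝ := fun x => mlAux α x 2 with hA
  -- the two rational functions agreeing on (0, ∞)
  set F : ℝ → ℝ := fun s => 4 * A (-2 * s) with hF
  set G : ℝ → ℝ := fun s => c1 ^ 2 + 2 * A (-s) - 2 * c1 * s * A (-s) + s ^ 2 * (A (-s)) ^ 2
    with hG
  have hexp : ∀ x : ℝ, mittagLeffler α x = 1 + c1 * x + x ^ 2 * A x := by
    intro x
    rw [ml_expand α x hα, hc1, hA]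
    ring
  have heq : ∀ s : ℝ, 0 < s → F s = G s := by
    intro s hs
    have hE := h' s hs.le
    rw [hexp, hexp] at hE
    apply mul_left_cancel₀ (pow_ne_zero 2 hs.ne' : (s:ℝ) ^ 2 ≠ 0)
    rw [hF, hG]
    ring_nf
    ring_nf at hE
    nlinarith [hE]
  -- limits along 𝓝[>] 0
  have hAt : Tendsto A (𝓝 0) (𝓝 c2) := by
    have := mlAux_tendsto α hα 2
    simpa [hA, hc2] using this
  have hid : Tendsto (fun s : ℝ => s) (𝓝[>] (0:ℝ)) (𝓝 0) :=
    tendsto_id.mono_right nhdsWithin_le_nhds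
  have hneg2 : Tendsto (fun s : ℝ => -2 * s) (𝓝[>] (0:ℝ)) (𝓝 0) := by
    have : Tendsto (fun s : ℝ => -2 * s) (𝓝 (0:ℝ)) (𝓝 (-2 * 0)) :=
      (continuous_const.mul continuous_id).tendsto 0
    simpa [Function.comp_def] using this.comp hid  -- careful
  have hneg : Tendsto (fun s : ℝ => -s) (𝓝[>] (0:ℝ)) (𝓝 0) := by
    have : Tendsto (fun s : ℝ => -s) (𝓝 (0:ℝ)) (𝓝 (-0)) := continuous_neg.tendsto 0
    simpa [Function.comp_def] using this.comp hid
  have hA2 : Tendsto (fun s : ℝ => A (-2 * s)) (𝓝[>] (0:ℝ)) (𝓝 c2) := hAt.comp hneg2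
  have hA1 : Tendsto (fun s : ℝ => A (-s)) (𝓝[>] (0:ℝ)) (𝓝 c2) := hAt.comp hneg
  have hFlim : Tendsto F (𝓝[>] (0:ℝ)) (𝓝 (4 * c2)) := hA2.const_mul 4
  have hGlim : Tendsto G (𝓝[>] (0:ℝ)) (𝓝 (c1 ^ 2 + 2 * c2)) := by
    have : Tendsto G (𝓝[>] (0:ℝ))
        (𝓝 (c1 ^ 2 + 2 * c2 - 2 * c1 * 0 * c2 + 0 ^ 2 * c2 ^ 2)) := by
      apply Tendsto.add
      apply Tendsto.sub
      · exact tendsto_const_nhds.add (hA1.const_mul 2)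
      · exact ((hid.const_mul (2 * c1)).mul hA1).congr (fun s => by ring)
      · exact ((hid.pow 2).mul (hA1.pow 2))
    simpa using this
  have hFG : F =ᶠ[𝓝[>] (0:ℝ)] G := by
    filter_upwards [self_mem_nhdsWithin] with s hs
    exact heq s hs
  have hkey : 4 * c2 = c1 ^ 2 + 2 * c2 :=
    tendsto_nhds_unique (hFlim.congr' hFG) hGlim
  have h2c : 2 * c2 = c1 ^ 2 := by linarith
  have hΓ1 : 0 < Real.Gamma (α + 1) := Real.Gamma_pos_of_pos (by linarith)
  have hΓ2 : 0 < Real.Gamma (α * 2 + 1) := Real.Gamma_pos_of_pos (by nlinarith)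
  have hmain : Real.Gamma (2 * α + 1) = 2 * Real.Gamma (α + 1) ^ 2 := by
    rw [hc1, hc2] at h2c
    rw [show 2 * α = α * 2 by ring]
    field_simp at h2c
    rw [show α * 2 = 2 * α by ring]
    linarith
  refine ⟨hmain, ?_⟩
  rw [hmain]
  have : Real.Gamma (α + 1) ≠ 0 := hΓ1.ne'
  field_simp
  ring
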